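/- Let f ∈ ℓ¹(Σ*) be rational of rank n with Hankel singular values 𝔰₁ ≥ ⋯ ≥ 𝔰ₙ, and fix 1 ≤ n̂ < n. For every rational f' : Σ* → ℝ of rank at most n̂ such that H_{f−f'} is a bounded operator on ℓ²(Σ*), the operator norm satisfies ‖H_f − H_{f'}‖_op ≥ 𝔰_{n̂+1}. -/

import Mathlib

open Matrix

/-- The function realized by a weighted finite automaton `⟨α₀, α∞, {A_σ}⟩`. -/
noncomputable def wfaFun {Γ : Type*} {n : ℕ} (α₀ αinf : Fin n → ℝ)
    (A : Γ → Matrix (Fin n) (Fin n) ℝ) (x : List Γ) : ℝ :=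
  α₀ ⬝ᵥ ((x.map A).prod).mulVec αinf

/-- `f` is realized by some WFA of dimension `m`. -/
def IsRealizedByDim {Γ : Type*} (m : ℕ) (f : List Γ → ℝ) : Prop :=
  ∃ (β₀ βinf : Fin m → ℝ) (B : Γ → Matrix (Fin m) (Fin m) ℝ),
    ∀ x : List Γ, f x = wfaFun β₀ βinf B x

set_option maxHeartbeats 2000000 in
/-- lower bound for low-rank approximation of rational series.
If `f ∈ ℓ¹` is rational of rank `n` with Hankel singular values
`𝔰₁ ≥ ⋯ ≥ 𝔰ₙ > 0` (witnessed by an SVD `f(pq) = ∑ i, 𝔰ᵢ uᵢ(p) vᵢ(q)` with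
orthonormal `u, v` in `ℓ²`), and `f'` is rational of rank at most `n̂` such
that the Hankel operator of `f − f'` is bounded on `ℓ²` with bound `C`
(i.e. `‖H_{f−f'} g‖₂² ≤ C² ‖g‖₂²`), then `C ≥ 𝔰_{n̂+1}`; that is, the operator
norm of `H_f − H_{f'}` is at least `𝔰_{n̂+1}`. -/
theorem hankel_low_rank_lower_bound {Γ : Type*} [Fintype Γ] {n : ℕ}
    (f : List Γ → ℝ) (hf1 : Summable fun x : List Γ => |f x|)
    (hreal : IsRealizedByDim n f)
    (hmin : ∀ m : ℕ, IsRealizedByDim m f → n ≤ m)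
    (s : Fin n → ℝ) (hpos : ∀ i, 0 < s i)
    (hmono : ∀ i j : Fin n, i ≤ j → s j ≤ s i)
    (u v : Fin n → List Γ → ℝ)
    (hu : ∀ i j : Fin n,
      HasSum (fun x : List Γ => u i x * u j x) (if i = j then 1 else 0))
    (hv : ∀ i j : Fin n,
      HasSum (fun x : List Γ => v i x * v j x) (if i = j then 1 else 0))
    (hsvd : ∀ p q : List Γ, f (p ++ q) = ∑ i, s i * u i p * v i q)
    (nh : ℕ) (h1 : 1 ≤ nh) (hn : nh < n)
    (f' : List Γ → ℝ) (hf' : IsRealizedByDim nh f')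
    (C : ℝ) (hC : 0 ≤ C)
    (hbound : ∀ g : List Γ → ℝ, Summable (fun x : List Γ => (g x) ^ 2) →
      Summable (fun x : List Γ =>
          (∑' y : List Γ, (f (x ++ y) - f' (x ++ y)) * g y) ^ 2) ∧
        (∑' x : List Γ, (∑' y : List Γ, (f (x ++ y) - f' (x ++ y)) * g y) ^ 2)
          ≤ C ^ 2 * ∑' x : List Γ, (g x) ^ 2) :
    s ⟨nh, hn⟩ ≤ C := by
  classical
  obtain ⟨β₀, βinf, B, hfB⟩ := hf'
  set δ := s ⟨nh, hn⟩ with hδdef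
  have hδpos : 0 < δ := hpos _
  set ι : Fin (nh + 1) → Fin n := Fin.castLE hn with hι
  have hιinj : Function.Injective ι := Fin.castLE_injective hn
  have core : ∀ t : ℝ, 0 < t → δ ^ 2 * (1 - 2 * t) ≤ C ^ 2 * (1 + t) := by
    intro t ht
    set ε : ℝ := t / (nh + 1 : ℝ) with hεdef
    have hεpos : 0 < ε := by positivity
    -- choose a big enough finite window F
    have hev : ∀ᶠ F : Finset (List Γ) in Filter.atTop, ∀ i : Fin (nh + 1), ∀ j : Fin n,
        |(∑ y ∈ F, v j y * v (ι i) y) - (if j = ι i then 1 else 0)| ≤ ε := by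
      rw [Filter.eventually_all]; intro i
      rw [Filter.eventually_all]; intro j
      have hball : ∀ᶠ z in nhds (if j = ι i then (1:ℝ) else 0),
          |z - (if j = ι i then (1:ℝ) else 0)| ≤ ε := by
        filter_upwards [Metric.closedBall_mem_nhds _ hεpos] with z hz
        simpa [Real.dist_eq] using Metric.mem_closedBall.mp hz
      exact (hv j (ι i)).eventually hball
    obtain ⟨F, hF⟩ := hev.exists
    -- the rank-nh factorization of f'
    set R : List Γ → Fin nh → ℝ := fun y => ((y.map B).prod) *ᵥ βinf with hR
    set L : List Γ → Fin nh → ℝ := fun x => β₀ ᵥ* ((x.map B).prod) with hL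
    have hsplit : ∀ x y : List Γ, f' (x ++ y) = ∑ k, L x k * R y k := by
      intro x y
      rw [hfB]
      unfold wfaFun
      rw [List.map_append, List.prod_append, ← mulVec_mulVec, dotProduct_mulVec]
      rfl
    -- a nonzero c killed by the f' rows on F
    set P : Matrix (Fin nh) (Fin (nh + 1)) ℝ :=
      Matrix.of fun k i => ∑ y ∈ F, R y k * v (ι i) y with hP
    obtain ⟨c, hc0, hcne⟩ : ∃ c : Fin (nh + 1) → ℝ, P *ᵥ c = 0 ∧ c ≠ 0 := by
      have hni : ¬ Function.Injective P.mulVecLin := by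
        intro h
        have h2 := LinearMap.finrank_le_finrank_of_injective h
        rw [Module.finrank_pi, Module.finrank_pi, Fintype.card_fin, Fintype.card_fin] at h2
        omega
      obtain ⟨a, b, hab, hne⟩ := Function.not_injective_iff.mp hni
      refine ⟨a - b, ?_, sub_ne_zero.mpr hne⟩
      have : P.mulVecLin (a - b) = 0 := by rw [map_sub, hab, sub_self]
      simpa [Matrix.mulVecLin_apply] using this
    set K : ℝ := ∑ i, c i ^ 2 with hK
    have hKpos : 0 < K := by
      obtain ⟨i, hi⟩ := Function.ne_iff.mp hcne
      have hci : c i ≠ 0 := by simpa using hi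
      have h2 : (0:ℝ) < c i ^ 2 := by
        have := abs_pos.mpr hci
        nlinarith [sq_abs (c i)]
      exact h2.trans_le (Finset.single_le_sum (fun j _ => sq_nonneg (c j)) (Finset.mem_univ i))
    set S : ℝ := ∑ i, |c i| with hS
    have hSnn : 0 ≤ S := Finset.sum_nonneg fun i _ => abs_nonneg _
    have hS2 : S ^ 2 ≤ (nh + 1 : ℝ) * K := by
      have := sq_sum_le_card_mul_sum_sq (s := Finset.univ) (f := fun i : Fin (nh+1) => |c i|)
      simpa [sq_abs, hK] using this
    have hεS : ε * S ^ 2 ≤ t * K := by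
      have h2 : ε * S ^ 2 ≤ ε * ((nh + 1 : ℝ) * K) :=
        mul_le_mul_of_nonneg_left hS2 hεpos.le
      have h3 : ε * ((nh + 1 : ℝ) * K) = t * K := by
        rw [hεdef]; field_simp
      linarith
    -- the test vector g
    set g : List Γ → ℝ := fun y => if y ∈ F then ∑ i, c i * v (ι i) y else 0 with hg
    have hg0 : ∀ y ∉ F, g y = 0 := fun y hy => if_neg hy
    have hgF : ∀ y ∈ F, g y = ∑ i, c i * v (ι i) y := fun y hy => if_pos hy
    have hgsum : Summable fun x => g x ^ 2 :=
      summable_of_ne_finset_zero (s := F) (fun y hy => by rw [hg0 y hy]; ring)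
    obtain ⟨hwsum, hwle⟩ := hbound g hgsum
    set a : Fin n → ℝ := fun j => ∑ y ∈ F, v j y * g y with ha
    set T : Fin (nh + 1) → Fin (nh + 1) → ℝ :=
      fun i i' => ∑ y ∈ F, v (ι i) y * v (ι i') y with hT
    have hTnear : ∀ i i', |T i i' - (if i = i' then 1 else 0)| ≤ ε := by
      intro i i'
      have h2 := hF i' (ι i)
      have h3 : (if ι i = ι i' then (1:ℝ) else 0) = (if i = i' then 1 else 0) := by
        simp [hιinj.eq_iff]
      rw [h3] at h2
      exact h2
    -- f' part vanishes
    have hRzero : ∀ k, ∑ y ∈ F, R y k * g y = 0 := by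
      intro k
      have h2 : ∑ y ∈ F, R y k * g y = (P *ᵥ c) k := by
        calc ∑ y ∈ F, R y k * g y = ∑ y ∈ F, ∑ i, (R y k * v (ι i) y) * c i := by
              refine Finset.sum_congr rfl fun y hy => ?_
              rw [hgF y hy, Finset.mul_sum]
              exact Finset.sum_congr rfl fun i _ => by ring
          _ = ∑ i, (∑ y ∈ F, R y k * v (ι i) y) * c i := by
              rw [Finset.sum_comm]
              exact Finset.sum_congr rfl fun i _ => by rw [Finset.sum_mul]
          _ = (P *ᵥ c) k := by
              simp [Matrix.mulVec, dotProduct, hP]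
      rw [h2, hc0]
      rfl
    -- value of the Hankel image
    have hw : ∀ x, (∑' y, (f (x ++ y) - f' (x ++ y)) * g y) = ∑ j, (s j * a j) * u j x := by
      intro x
      rw [tsum_eq_sum (s := F) (fun y hy => by rw [hg0 y hy]; ring)]
      have h2 : ∑ y ∈ F, f' (x ++ y) * g y = 0 := by
        calc ∑ y ∈ F, f' (x ++ y) * g y = ∑ y ∈ F, ∑ k, L x k * (R y k * g y) := by
              refine Finset.sum_congr rfl fun y _ => ?_
              rw [hsplit, Finset.sum_mul]
              exact Finset.sum_congr rfl fun k _ => by ring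
          _ = ∑ k, L x k * ∑ y ∈ F, R y k * g y := by
              rw [Finset.sum_comm]
              exact Finset.sum_congr rfl fun k _ => by rw [Finset.mul_sum]
          _ = 0 := by simp [hRzero]
      have h3 : ∑ y ∈ F, f (x ++ y) * g y = ∑ j, (s j * a j) * u j x := by
        calc ∑ y ∈ F, f (x ++ y) * g y = ∑ y ∈ F, ∑ j, (s j * u j x) * (v j y * g y) := by
              refine Finset.sum_congr rfl fun y _ => ?_
              rw [hsvd, Finset.sum_mul]
              exact Finset.sum_congr rfl fun j _ => by ring
          _ = ∑ j, (s j * a j) * u j x := by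
              rw [Finset.sum_comm]
              refine Finset.sum_congr rfl fun j _ => ?_
              rw [← Finset.mul_sum,
                show (∑ y ∈ F, v j y * g y) = a j from rfl]
              ring
      calc ∑ y ∈ F, (f (x ++ y) - f' (x ++ y)) * g y
          = ∑ y ∈ F, (f (x ++ y) * g y - f' (x ++ y) * g y) := by
            exact Finset.sum_congr rfl fun y _ => by ring
        _ = ∑ y ∈ F, f (x ++ y) * g y - ∑ y ∈ F, f' (x ++ y) * g y :=
            Finset.sum_sub_distrib _ _
        _ = ∑ j, (s j * a j) * u j x := by rw [h2, h3, sub_zero]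
    -- Parseval for the image
    have hB : HasSum (fun x => (∑ j, (s j * a j) * u j x) ^ 2) (∑ j, (s j * a j) ^ 2) := by
      have h1 : ∀ x, (∑ j, (s j * a j) * u j x) ^ 2
          = ∑ j, ∑ j', ((s j * a j) * (s j' * a j')) * (u j x * u j' x) := by
        intro x
        rw [sq, Finset.sum_mul_sum]
        exact Finset.sum_congr rfl fun j _ => Finset.sum_congr rfl fun j' _ => by ring
      have h2 : HasSum (fun x => ∑ j, ∑ j', ((s j * a j) * (s j' * a j')) * (u j x * u j' x))
          (∑ j, ∑ j', ((s j * a j) * (s j' * a j')) * (if j = j' then 1 else 0)) :=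
        hasSum_sum fun j _ => hasSum_sum fun j' _ => (hu j j').mul_left _
      have h3 : (∑ j, ∑ j', ((s j * a j) * (s j' * a j')) * (if j = j' then 1 else 0))
          = ∑ j, (s j * a j) ^ 2 := by
        refine Finset.sum_congr rfl fun j _ => ?_
        rw [Finset.sum_eq_single j]
        · simp [sq]
        · intro j' _ hj'; simp [Ne.symm hj']
        · intro h; exact absurd (Finset.mem_univ j) h
      simp only [h1]
      rw [← h3]
      exact h2
    have hwval : (∑' x, (∑' y, (f (x ++ y) - f' (x ++ y)) * g y) ^ 2)
        = ∑ j, (s j * a j) ^ 2 := by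
      rw [tsum_congr (fun x => by rw [hw x])]
      exact hB.tsum_eq
    -- norm of g
    have hgval : (∑' x, g x ^ 2) = ∑ i, ∑ i', (c i * c i') * T i i' := by
      rw [tsum_eq_sum (s := F) (fun y hy => by rw [hg0 y hy]; ring)]
      calc ∑ y ∈ F, g y ^ 2
          = ∑ y ∈ F, ∑ i, ∑ i', (c i * c i') * (v (ι i) y * v (ι i') y) := by
            refine Finset.sum_congr rfl fun y hy => ?_
            rw [hgF y hy, sq, Finset.sum_mul_sum]
            exact Finset.sum_congr rfl fun i _ => Finset.sum_congr rfl fun i' _ => by ring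
        _ = ∑ i, ∑ i', (c i * c i') * T i i' := by
            rw [Finset.sum_comm]
            refine Finset.sum_congr rfl fun i _ => ?_
            rw [Finset.sum_comm]
            refine Finset.sum_congr rfl fun i' _ => ?_
            rw [← Finset.mul_sum]
    have hgupper : (∑' x, g x ^ 2) ≤ K + t * K := by
      rw [hgval]
      have h4 : ∀ i i' : Fin (nh + 1), (c i * c i') * T i i'
          ≤ (c i * c i') * (if i = i' then 1 else 0) + |c i| * |c i'| * ε := by
        intro i i'
        have h5 := hTnear i i'
        have h6 : (c i * c i') * (T i i' - (if i = i' then 1 else 0))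
            ≤ |c i| * |c i'| * ε := by
          calc (c i * c i') * (T i i' - (if i = i' then 1 else 0))
              ≤ |(c i * c i') * (T i i' - (if i = i' then 1 else 0))| := le_abs_self _
            _ = |c i| * |c i'| * |T i i' - (if i = i' then 1 else 0)| := by
                rw [abs_mul, abs_mul]
            _ ≤ |c i| * |c i'| * ε := by
                exact mul_le_mul_of_nonneg_left h5 (by positivity)
        nlinarith
      calc ∑ i, ∑ i', (c i * c i') * T i i'
          ≤ ∑ i, ∑ i', ((c i * c i') * (if i = i' then 1 else 0) + |c i| * |c i'| * ε) :=
            Finset.sum_le_sum fun i _ => Finset.sum_le_sum fun i' _ => h4 i i'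
        _ = K + ε * S ^ 2 := by
            rw [Finset.sum_congr rfl (fun i _ => Finset.sum_add_distrib),
              Finset.sum_add_distrib]
            congr 1
            · rw [hK]
              refine Finset.sum_congr rfl fun i _ => ?_
              rw [Finset.sum_eq_single i]
              · simp [sq]
              · intro j _ hj; simp [Ne.symm hj]
              · intro h; exact absurd (Finset.mem_univ i) h
            · rw [sq, hS, Finset.sum_mul_sum, Finset.mul_sum]
              refine Finset.sum_congr rfl fun i _ => ?_
              rw [Finset.mul_sum]
              exact Finset.sum_congr rfl fun i' _ => by ring
        _ ≤ K + t * K := by linarith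
    -- the coefficients a (ι i) are close to c i
    have haT : ∀ i : Fin (nh + 1), a (ι i) = ∑ i', c i' * T i i' := by
      intro i
      calc a (ι i) = ∑ y ∈ F, ∑ i', c i' * (v (ι i) y * v (ι i') y) := by
            rw [show a (ι i) = ∑ y ∈ F, v (ι i) y * g y from rfl]
            refine Finset.sum_congr rfl fun y hy => ?_
            rw [hgF y hy, Finset.mul_sum]
            exact Finset.sum_congr rfl fun i' _ => by ring
        _ = ∑ i', c i' * T i i' := by
            rw [Finset.sum_comm]
            refine Finset.sum_congr rfl fun i' _ => ?_
            rw [← Finset.mul_sum]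
    have he : ∀ i : Fin (nh + 1), |a (ι i) - c i| ≤ ε * S := by
      intro i
      have h2 : a (ι i) - c i = ∑ i', c i' * (T i i' - (if i = i' then 1 else 0)) := by
        rw [haT i]
        rw [Finset.sum_congr rfl (fun i' _ => mul_sub (c i') (T i i') _),
          Finset.sum_sub_distrib]
        congr 1
        rw [Finset.sum_eq_single i]
        · simp
        · intro j _ hj; simp [Ne.symm hj]
        · intro h; exact absurd (Finset.mem_univ i) h
      rw [h2]
      calc |∑ i', c i' * (T i i' - (if i = i' then 1 else 0))|
          ≤ ∑ i', |c i' * (T i i' - (if i = i' then 1 else 0))| :=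
            Finset.abs_sum_le_sum_abs _ _
        _ ≤ ∑ i', |c i'| * ε := by
            refine Finset.sum_le_sum fun i' _ => ?_
            rw [abs_mul]
            exact mul_le_mul_of_nonneg_left (hTnear i i') (abs_nonneg _)
        _ = ε * S := by rw [hS, Finset.mul_sum]; exact Finset.sum_congr rfl fun i' _ => by ring
    have hlow : K - 2 * (t * K) ≤ ∑ i : Fin (nh + 1), a (ι i) ^ 2 := by
      have h1 : ∀ i : Fin (nh + 1), c i ^ 2 - 2 * (|c i| * (ε * S)) ≤ a (ι i) ^ 2 := by
        intro i
        have h2 := he i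
        have h3 : -(|c i| * |a (ι i) - c i|) ≤ c i * (a (ι i) - c i) := by
          rw [← abs_mul]; exact neg_abs_le _
        have h4 : |c i| * |a (ι i) - c i| ≤ |c i| * (ε * S) :=
          mul_le_mul_of_nonneg_left h2 (abs_nonneg _)
        nlinarith [sq_nonneg (a (ι i) - c i), sq_abs (c i)]
      have h5 : ∑ i : Fin (nh + 1), (c i ^ 2 - 2 * (|c i| * (ε * S)))
          = K - 2 * (ε * S ^ 2) := by
        rw [Finset.sum_sub_distrib, ← hK]
        congr 1
        calc ∑ i : Fin (nh+1), 2 * (|c i| * (ε * S)) = ∑ i : Fin (nh+1), (2 * (ε * S)) * |c i| :=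
              Finset.sum_congr rfl fun i _ => by ring
          _ = (2 * (ε * S)) * S := by rw [← Finset.mul_sum]
          _ = 2 * (ε * S ^ 2) := by ring
      have h6 : K - 2 * (ε * S ^ 2) ≤ ∑ i : Fin (nh + 1), a (ι i) ^ 2 := by
        rw [← h5]; exact Finset.sum_le_sum fun i _ => h1 i
      linarith
    -- singular value lower bound
    have hsv : δ ^ 2 * ∑ i : Fin (nh + 1), a (ι i) ^ 2 ≤ ∑ j, (s j * a j) ^ 2 := by
      have h1 : ∑ i : Fin (nh + 1), (s (ι i) * a (ι i)) ^ 2 ≤ ∑ j, (s j * a j) ^ 2 := by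
        have himg : ∑ i : Fin (nh + 1), (s (ι i) * a (ι i)) ^ 2
            = ∑ j ∈ Finset.univ.image ι, (s j * a j) ^ 2 :=
          (Finset.sum_image (f := fun j => (s j * a j) ^ 2) (g := ι) (fun x _ y _ h => hιinj h)).symm
        rw [himg]
        exact Finset.sum_le_sum_of_subset_of_nonneg (Finset.subset_univ _)
          (fun j _ _ => sq_nonneg _)
      refine le_trans ?_ h1
      rw [Finset.mul_sum]
      refine Finset.sum_le_sum fun i _ => ?_
      have hle : δ ≤ s (ι i) := by
        refine hmono (ι i) ⟨nh, hn⟩ ?_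
        rw [Fin.le_def]
        simpa [hι] using Nat.lt_succ_iff.mp i.isLt
      have h2 : δ ^ 2 ≤ (s (ι i)) ^ 2 := by nlinarith
      calc δ ^ 2 * a (ι i) ^ 2 ≤ (s (ι i)) ^ 2 * a (ι i) ^ 2 :=
            mul_le_mul_of_nonneg_right h2 (sq_nonneg _)
        _ = (s (ι i) * a (ι i)) ^ 2 := by ring
    -- assemble
    have hchain : δ ^ 2 * (K - 2 * (t * K)) ≤ C ^ 2 * (K + t * K) := by
      have h1 : δ ^ 2 * (K - 2 * (t * K)) ≤ δ ^ 2 * ∑ i : Fin (nh + 1), a (ι i) ^ 2 :=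
        mul_le_mul_of_nonneg_left hlow (sq_nonneg _)
      have h2 : (∑' x, (∑' y, (f (x ++ y) - f' (x ++ y)) * g y) ^ 2)
          ≤ C ^ 2 * (K + t * K) := by
        refine hwle.trans ?_
        exact mul_le_mul_of_nonneg_left hgupper (sq_nonneg _)
      rw [hwval] at h2
      linarith [hsv]
    have hfin : (δ ^ 2 * (1 - 2 * t)) * K ≤ (C ^ 2 * (1 + t)) * K := by
      calc (δ ^ 2 * (1 - 2 * t)) * K = δ ^ 2 * (K - 2 * (t * K)) := by ring
        _ ≤ C ^ 2 * (K + t * K) := hchain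
        _ = (C ^ 2 * (1 + t)) * K := by ring
    exact le_of_mul_le_mul_right hfin hKpos
  by_contra hlt
  push_neg at hlt
  have hC2 : C ^ 2 < δ ^ 2 := by nlinarith
  set t : ℝ := (δ ^ 2 - C ^ 2) / (2 * δ ^ 2 + C ^ 2 + 1) with htdef
  have hD : (0:ℝ) < 2 * δ ^ 2 + C ^ 2 + 1 := by positivity
  have ht : 0 < t := div_pos (by linarith) hD
  have key := core t ht
  have htD : t * (2 * δ ^ 2 + C ^ 2 + 1) = δ ^ 2 - C ^ 2 := div_mul_cancel₀ _ hD.ne'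
  have key' : δ ^ 2 - C ^ 2 ≤ t * (2 * δ ^ 2 + C ^ 2) := by nlinarith [key]
  have hdist : t * (2 * δ ^ 2 + C ^ 2 + 1) = t * (2 * δ ^ 2 + C ^ 2) + t := by ring
  linarith
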